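/- (One-step explicit solution for the twisted Sierpiński gasket, equation (4.2).) Let x0 ≥ y0 > 0. Then 9x0² − 4x0y0 − 4y0² > 0, and setting M = √(9x0² − 4x0y0 − 4y0²), x1 = (1/10)(x0 + 2y0 + 3M), y1 = (1/5)(3x0 + y0 − M), one has x1 ≥ y1 > 0, and the triples (x0, y0, y0) and (x1, y1, y1) satisfy the twisted one-step compatibility equations: x0 = x1 + ψ(x1; y1, y1) and y0 = y1 + ψ(y1; y1, x1). -/

import Mathlib

noncomputable section

/-- Twisted Δ-Y transfer term `ψ(x; y, z) = 2yz/(x+y+z)`. -/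
def psi (x y z : ℝ) : ℝ := 2 * y * z / (x + y + z)

theorem stmt17 (x0 y0 : ℝ) (hy : 0 < y0) (hle : y0 ≤ x0)
    (M x1 y1 : ℝ)
    (hM : M = Real.sqrt (9 * x0 ^ 2 - 4 * x0 * y0 - 4 * y0 ^ 2))
    (hx1 : x1 = (x0 + 2 * y0 + 3 * M) / 10)
    (hy1 : y1 = (3 * x0 + y0 - M) / 5) :
    0 < 9 * x0 ^ 2 - 4 * x0 * y0 - 4 * y0 ^ 2 ∧
    0 < y1 ∧ y1 ≤ x1 ∧
    x0 = x1 + psi x1 y1 y1 ∧ y0 = y1 + psi y1 y1 x1 := by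
  have hD : 0 < 9 * x0 ^ 2 - 4 * x0 * y0 - 4 * y0 ^ 2 := by nlinarith
  have hM0 : 0 ≤ M := hM ▸ Real.sqrt_nonneg _
  have hM2 : M ^ 2 = 9 * x0 ^ 2 - 4 * x0 * y0 - 4 * y0 ^ 2 := by
    rw [hM, Real.sq_sqrt hD.le]
  have hx0 : 0 < x0 := lt_of_lt_of_le hy hle
  have hMx : x0 ≤ M := by nlinarith
  have hM3 : M < 3 * x0 + y0 := by nlinarith
  have hy1pos : 0 < y1 := by rw [hy1]; linarith
  have hS : 0 < x1 + y1 + y1 := by rw [hx1, hy1]; linarith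
  refine ⟨hD, hy1pos, by rw [hx1, hy1]; linarith, ?_, ?_⟩
  · rw [psi]
    field_simp
    subst hx1 hy1
    ring_nf
    nlinarith [hM2]
  · rw [psi]
    have hS' : y1 + y1 + x1 ≠ 0 := by linarith
    rw [add_div' _ _ _ hS', eq_div_iff hS']
    subst hx1 hy1
    ring_nf
    nlinarith [hM2]
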